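/- Let n ∈ ℕ, r : Fin n → ℤ with r i ∈ {0, 2} for every i, and let W ∈ MvPolynomial (Fin n) ℂ have R-charge 2 under r. Then every monomial m in the support of W contains exactly one variable of charge 2, with exponent exactly 1: there exist polynomials f i ∈ MvPolynomial (Fin n) ℂ, each involving only variables j with r j = 0, such that W = ∑_{i : r i = 2} (MvPolynomial.X i) * f i. -/

import Mathlib

open MvPolynomial Finset

lemma charge_sum_one (n : ℕ) (r : Fin n → ℤ)
    (hr : ∀ i, r i = 0 ∨ r i = 2) (m : Fin n →₀ ℕ)
    (hm : ∑ i, r i * (m i : ℤ) = 2) :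
    ∑ i ∈ Finset.univ.filter (fun i => r i = 2), m i = 1 := by
  have h1 : ∑ i ∈ Finset.univ.filter (fun i => r i = 2), (2 : ℤ) * (m i : ℤ)
      = ∑ i, r i * (m i : ℤ) := by
    rw [← Finset.sum_filter_add_sum_filter_not Finset.univ (fun i => r i = 2)
      (fun i => r i * (m i : ℤ))]
    have h2 : ∑ i ∈ Finset.univ.filter (fun i => ¬ r i = 2), r i * (m i : ℤ) = 0 := by
      apply Finset.sum_eq_zero
      intro i hi
      simp only [Finset.mem_filter] at hi
      rcases hr i with h | h
      · simp [h]
      · exact absurd h hi.2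
    rw [h2, add_zero]
    apply Finset.sum_congr rfl
    intro i hi
    simp only [Finset.mem_filter] at hi
    rw [hi.2]
  rw [hm, ← Finset.mul_sum] at h1
  have h3 : (∑ i ∈ Finset.univ.filter (fun i => r i = 2), (m i : ℤ)) = 1 := by linarith
  exact_mod_cast h3

theorem rcharge_two_X_linear_decomposition (n : ℕ) (r : Fin n → ℤ)
    (hr : ∀ i, r i = 0 ∨ r i = 2)
    (W : MvPolynomial (Fin n) ℂ)
    (hW : ∀ m ∈ W.support, ∑ i, r i * (m i : ℤ) = 2) :
    ∃ f : Fin n → MvPolynomial (Fin n) ℂ,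
      (∀ i, ∀ m ∈ (f i).support, ∀ j, r j ≠ 0 → m j = 0) ∧
      W = ∑ i ∈ Finset.univ.filter (fun i => r i = 2),
            MvPolynomial.X i * f i := by
  set S := Finset.univ.filter (fun i => r i = 2) with hS
  have key : ∀ m ∈ W.support, ∀ i ∈ S, m i ≠ 0 →
      m i = 1 ∧ ∀ j ∈ S, j ≠ i → m j = 0 := by
    intro m hm i hi hmi
    have hsum : ∑ j ∈ S, m j = 1 := charge_sum_one n r hr m (hW m hm)
    have hle : m i ≤ 1 := hsum ▸ Finset.single_le_sum (fun j _ => Nat.zero_le _) hi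
    have hmi1 : m i = 1 := le_antisymm hle (Nat.one_le_iff_ne_zero.mpr hmi)
    refine ⟨hmi1, ?_⟩
    have herase : ∑ j ∈ S.erase i, m j = 0 := by
      have h := Finset.sum_erase_add S m hi
      omega
    intro j hj hji
    exact Finset.sum_eq_zero_iff.mp herase j (Finset.mem_erase.mpr ⟨hji, hj⟩)
  refine ⟨fun i => if i ∈ S then
      ∑ m ∈ W.support.filter (fun m => m i ≠ 0),
        MvPolynomial.monomial (m - Finsupp.single i 1) (W.coeff m) else 0, ?_, ?_⟩
  · intro i m' hm' j hj
    by_cases hiS : i ∈ S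
    · simp only [hiS, if_true] at hm'
      have hmem := MvPolynomial.support_sum hm'
      simp only [Finset.mem_biUnion, Finset.mem_filter] at hmem
      obtain ⟨m, ⟨hm, hmi⟩, hm'mem⟩ := hmem
      have hsub := MvPolynomial.support_monomial_subset hm'mem
      simp only [Finset.mem_singleton] at hsub
      subst hsub
      have hjS : j ∈ S := by
        simp only [hS, Finset.mem_filter, Finset.mem_univ, true_and]
        rcases hr j with h | h
        · exact absurd h hj
        · exact h
      obtain ⟨hmi1, hother⟩ := key m hm i hiS hmi
      rw [Finsupp.tsub_apply]
      by_cases hji : j = i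
      · subst hji; simp [hmi1]
      · rw [hother j hjS hji]; simp
    · simp only [hiS, if_false, MvPolynomial.support_zero] at hm'
      exact absurd hm' (Finset.notMem_empty _)
  · calc W = ∑ m ∈ W.support, MvPolynomial.monomial m (W.coeff m) :=
        (MvPolynomial.support_sum_monomial_coeff W).symm
      _ = ∑ m ∈ W.support, ∑ i ∈ S,
            (if m i ≠ 0 then MvPolynomial.monomial m (W.coeff m) else 0) := by
        apply Finset.sum_congr rfl
        intro m hm
        rw [← Finset.sum_filter, Finset.sum_const]
        have hsum : ∑ j ∈ S, m j = 1 := charge_sum_one n r hr m (hW m hm)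
        obtain ⟨i, hiS, hmi⟩ : ∃ i ∈ S, m i ≠ 0 := by
          by_contra h
          push_neg at h
          rw [Finset.sum_eq_zero (fun j hj => by simpa using h j hj)] at hsum
          exact one_ne_zero hsum.symm
        have hsing : S.filter (fun i => m i ≠ 0) = {i} := by
          apply Finset.eq_singleton_iff_unique_mem.mpr
          refine ⟨Finset.mem_filter.mpr ⟨hiS, hmi⟩, ?_⟩
          intro j hj
          simp only [Finset.mem_filter] at hj
          by_contra hji
          exact hj.2 ((key m hm i hiS hmi).2 j hj.1 hji)
        rw [hsing]
        simp
      _ = ∑ i ∈ S, ∑ m ∈ W.support,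
            (if m i ≠ 0 then MvPolynomial.monomial m (W.coeff m) else 0) :=
        Finset.sum_comm
      _ = ∑ i ∈ S, MvPolynomial.X i * (if i ∈ S then
          ∑ m ∈ W.support.filter (fun m => m i ≠ 0),
            MvPolynomial.monomial (m - Finsupp.single i 1) (W.coeff m) else 0) := by
        apply Finset.sum_congr rfl
        intro i hi
        rw [if_pos hi, Finset.sum_filter, Finset.mul_sum]
        apply Finset.sum_congr rfl
        intro m hm
        by_cases hmi : m i ≠ 0
        · rw [if_pos hmi, if_pos hmi, MvPolynomial.X, MvPolynomial.monomial_mul, one_mul,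
            add_tsub_cancel_of_le (Finsupp.single_le_iff.mpr (Nat.one_le_iff_ne_zero.mpr hmi))]
        · rw [if_neg hmi, if_neg hmi, mul_zero]
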